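/- Let K ⊂ ℝⁿ be a compact convex set with nonempty interior, let f : K → ℝ be a continuous convex function, and let T > 0. If X is a random point in K with density proportional to exp(−f(x)/T), then E[f(X)] − min_{x∈K} f(x) ≤ (n+1) T. -/

import Mathlib

open MeasureTheory

set_option maxHeartbeats 1000000

/-- (Kalai–Vempala, Lemma 4.1, extended to convex functions.)
Let `K ⊂ ℝⁿ` be a compact convex set with nonempty interior, `f : K → ℝ` a continuous
convex function and `T > 0`.  If `X` has density proportional to `exp(−f(x)/T)` on `K`,
then `E[f(X)] − min_{x∈K} f(x) ≤ (n+1) T`. -/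
theorem annealing_expectation_bound
    {n : ℕ} (K : Set (EuclideanSpace ℝ (Fin n)))
    (hKcomp : IsCompact K) (hKconv : Convex ℝ K) (hKint : (interior K).Nonempty)
    (f : EuclideanSpace ℝ (Fin n) → ℝ)
    (hfcont : ContinuousOn f K) (hfconv : ConvexOn ℝ K f)
    (T : ℝ) (hT : 0 < T) :
    (∫ x, f x ∂((∫⁻ x in K, ENNReal.ofReal (Real.exp (-f x / T)))⁻¹ •
          ((volume.restrict K).withDensity fun x => ENNReal.ofReal (Real.exp (-f x / T)))))
        - sInf (f '' K)
      ≤ (n + 1) * T := by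
  classical
  obtain ⟨x₀, hx₀⟩ := hKint
  have hKne : K.Nonempty := ⟨x₀, interior_subset hx₀⟩
  have hKmeas : MeasurableSet K := hKcomp.measurableSet
  obtain ⟨z, hzK, hzmin⟩ := hKcomp.exists_isMinOn hKne hfcont
  set m : ℝ := f z with hm
  have hsInf : sInf (f '' K) = m := by
    refine IsLeast.csInf_eq ⟨⟨z, hzK, rfl⟩, ?_⟩
    rintro _ ⟨y, hyK, rfl⟩; exact hzmin hyK
  set g : EuclideanSpace ℝ (Fin n) → ℝ := fun x => f x - m with hgdef
  have hgcont : ContinuousOn g K := hfcont.sub continuousOn_const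
  have hg0 : ∀ x ∈ K, 0 ≤ g x := fun x hx => sub_nonneg.2 (hzmin hx)
  -- parameters
  set δ : ℝ := 1 / ((n : ℝ) + 2) ^ 2 with hδdef
  have hδpos : 0 < δ := by positivity
  have hδlt : δ < 1 := by
    rw [hδdef, div_lt_one (by positivity)]
    nlinarith [Nat.cast_nonneg (α := ℝ) n]
  set b : ℝ := 1 - δ with hbdef
  have hb0 : 0 < b := by simp [hbdef]; linarith
  have hb1 : b < 1 := by simp [hbdef]; linarith
  set T' : ℝ := T / b with hT'def
  have hT'pos : 0 < T' := by positivity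
  -- basic integrability
  have hint1 : IntegrableOn (fun x => Real.exp (-g x / T)) K volume :=
    (Real.continuous_exp.comp_continuousOn (hgcont.neg.div_const T)).integrableOn_compact hKcomp
  have hint2 : IntegrableOn (fun x => Real.exp (-g x / T')) K volume :=
    (Real.continuous_exp.comp_continuousOn (hgcont.neg.div_const T')).integrableOn_compact hKcomp
  have hint3 : IntegrableOn (fun x => g x * Real.exp (-g x / T)) K volume :=
    (hgcont.mul (Real.continuous_exp.comp_continuousOn
      (hgcont.neg.div_const T))).integrableOn_compact hKcomp
  have hint4 : IntegrableOn (fun x => Real.exp (-f x / T)) K volume :=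
    (Real.continuous_exp.comp_continuousOn (hfcont.neg.div_const T)).integrableOn_compact hKcomp
  have hint5 : IntegrableOn (fun x => Real.exp (-f x / T) * f x) K volume :=
    ((Real.continuous_exp.comp_continuousOn (hfcont.neg.div_const T)).mul
      hfcont).integrableOn_compact hKcomp
  -- the main quantities
  set Z : ℝ := ∫ x in K, Real.exp (-g x / T) with hZdef
  set I : ℝ := ∫ x in K, g x * Real.exp (-g x / T) with hIdef
  have hZnonneg : 0 ≤ Z := setIntegral_nonneg hKmeas fun x _ => (Real.exp_pos _).le
  have hZpos : 0 < Z := by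
    obtain ⟨w, hwK, hwmax⟩ := hKcomp.exists_isMaxOn hKne hgcont
    have hKvol : 0 < volume K :=
      lt_of_lt_of_le ((isOpen_interior.measure_pos volume) ⟨x₀, hx₀⟩)
        (measure_mono interior_subset)
    have hKvolTop : volume K < ⊤ := hKcomp.measure_lt_top
    have hconst : IntegrableOn (fun _ : EuclideanSpace ℝ (Fin n) =>
        Real.exp (-g w / T)) K volume := integrableOn_const hKvolTop.ne
    have hmono := setIntegral_mono_on hconst hint1 hKmeas
      (fun x hx => Real.exp_le_exp.2
        (div_le_div_of_nonneg_right (neg_le_neg (hwmax hx)) hT.le))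
    rw [setIntegral_const, smul_eq_mul] at hmono
    have : (volume K).toReal * Real.exp (-g w / T) ≤ Z := hmono
    have h1 : 0 < (volume K).toReal := ENNReal.toReal_pos hKvol.ne' hKvolTop.ne
    nlinarith [Real.exp_pos (-g w / T)]
  -- Step 1 : Z(T') ≤ b⁻ⁿ Z
  have step1 : (∫ x in K, Real.exp (-g x / T')) ≤ (b ^ n)⁻¹ * Z := by
    set h : EuclideanSpace ℝ (Fin n) → ℝ :=
      K.indicator (fun x => Real.exp (-g x / T)) with hhdef
    have hInt_h : Integrable h volume := hint1.integrable_indicator hKmeas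
    have hnn : ∀ y, 0 ≤ h y := Set.indicator_nonneg fun x _ => (Real.exp_pos _).le
    have key : ∀ y : EuclideanSpace ℝ (Fin n),
        z + b • (y - z) = (z - b • z) + b • y := fun y => by module
    have hIntφ : Integrable (fun y => h (z + b • (y - z))) volume := by
      simp_rw [key]
      exact (hInt_h.comp_add_left (z - b • z)).comp_smul hb0.ne'
    have hA : ∫ y, h (z + b • (y - z)) = (b ^ n)⁻¹ * ∫ y, h y := by
      calc ∫ y, h (z + b • (y - z)) = ∫ y, h ((z - b • z) + b • y) := by simp_rw [key]
        _ = (b ^ Module.finrank ℝ (EuclideanSpace ℝ (Fin n)))⁻¹ •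
              ∫ w, h ((z - b • z) + w) :=
            Measure.integral_comp_smul_of_nonneg volume
              (fun w => h ((z - b • z) + w)) b (hR := hb0.le)
        _ = (b ^ n)⁻¹ * ∫ y, h y := by
            rw [integral_add_left_eq_self, finrank_euclideanSpace_fin, smul_eq_mul]
    have hB : (∫ x in K, Real.exp (-g x / T')) ≤ ∫ y in K, h (z + b • (y - z)) := by
      refine setIntegral_mono_on hint2 hIntφ.integrableOn hKmeas fun y hy => ?_
      have hmem : z + b • (y - z) ∈ K := by
        have := hKconv hzK hy (by linarith : (0:ℝ) ≤ 1 - b) hb0.le (by ring)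
        have e : (1 - b) • z + b • y = z + b • (y - z) := by module
        rwa [e] at this
      have hcvx : f (z + b • (y - z)) ≤ (1 - b) * f z + b * f y := by
        have := hfconv.2 hzK hy (by linarith : (0:ℝ) ≤ 1 - b) hb0.le (by ring)
        have e : (1 - b) • z + b • y = z + b • (y - z) := by module
        rw [e] at this
        simpa [smul_eq_mul] using this
      have hgb : g (z + b • (y - z)) ≤ b * g y := by
        simp only [hgdef]
        nlinarith
      have hval : h (z + b • (y - z)) = Real.exp (-g (z + b • (y - z)) / T) :=
        Set.indicator_of_mem hmem _
      rw [hval]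
      apply Real.exp_le_exp.2
      rw [hT'def, div_div_eq_mul_div]
      exact div_le_div_of_nonneg_right (by linarith) hT.le
    have hC : (∫ y in K, h (z + b • (y - z))) ≤ ∫ y, h (z + b • (y - z)) :=
      setIntegral_le_integral hIntφ (Filter.Eventually.of_forall fun y => hnn _)
    calc (∫ x in K, Real.exp (-g x / T')) ≤ ∫ y, h (z + b • (y - z)) := hB.trans hC
      _ = (b ^ n)⁻¹ * ∫ y, h y := hA
      _ = (b ^ n)⁻¹ * Z := by rw [hhdef, integral_indicator hKmeas]
  -- Step 2 : Z + (δ/T) I ≤ Z(T')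
  have step2 : Z + (δ / T) * I ≤ ∫ x in K, Real.exp (-g x / T') := by
    have hptwise : ∀ x ∈ K,
        Real.exp (-g x / T) + (δ / T) * (g x * Real.exp (-g x / T))
          ≤ Real.exp (-g x / T') := by
      intro x hx
      have hu : 0 ≤ g x := hg0 x hx
      have hsplit : -g x / T' = -g x / T + g x * δ / T := by
        rw [hT'def]
        field_simp
        ring
      rw [hsplit, Real.exp_add]
      have h1 : g x * δ / T + 1 ≤ Real.exp (g x * δ / T) := Real.add_one_le_exp _
      have h2 : 0 < Real.exp (-g x / T) := Real.exp_pos _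
      have h3 := mul_le_mul_of_nonneg_left h1 h2.le
      have e : Real.exp (-g x / T) + δ / T * (g x * Real.exp (-g x / T))
          = Real.exp (-g x / T) * (g x * δ / T + 1) := by ring
      rw [e]
      exact h3
    have := setIntegral_mono_on
      (hint1.add ((hint3.const_mul (δ / T)))) hint2 hKmeas hptwise
    calc Z + (δ / T) * I
        = ∫ x in K, (Real.exp (-g x / T) + (δ / T) * (g x * Real.exp (-g x / T))) := by
          rw [integral_add hint1 (hint3.const_mul (δ / T)), integral_const_mul]
      _ ≤ ∫ x in K, Real.exp (-g x / T') := this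
  -- Step 3 : I ≤ (n+1) T Z
  have harith : (b ^ n)⁻¹ - 1 ≤ ((n : ℝ) + 1) * δ := by
    have hbp : 1 - (n : ℝ) * δ ≤ b ^ n := by
      have h := one_add_mul_le_pow (a := -δ) (by linarith : (-2:ℝ) ≤ -δ) n
      rw [show (1 : ℝ) + -δ = b from by rw [hbdef]; ring] at h
      linarith
    have hbppos : 0 < b ^ n := pow_pos hb0 n
    have hδn : (n : ℝ) * ((n : ℝ) + 1) * δ ≤ 1 := by
      rw [hδdef, mul_one_div, div_le_one (by positivity)]
      nlinarith [Nat.cast_nonneg (α := ℝ) n]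
    have hkey : 1 ≤ (((n : ℝ) + 1) * δ + 1) * b ^ n := by
      nlinarith [mul_le_mul_of_nonneg_right hδn hδpos.le, Nat.cast_nonneg (α := ℝ) n,
        mul_le_mul_of_nonneg_left hbp (mul_nonneg (by positivity : (0:ℝ) ≤ ((n : ℝ) + 1) * δ) hδpos.le)]
    rw [sub_le_iff_le_add, inv_eq_one_div, div_le_iff₀ hbppos]
    linarith
  have step3 : I ≤ ((n : ℝ) + 1) * T * Z := by
    have h1 : (δ / T) * I ≤ ((b ^ n)⁻¹ - 1) * Z := by
      have := step2.trans step1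
      linarith
    have h2 : ((b ^ n)⁻¹ - 1) * Z ≤ (((n : ℝ) + 1) * δ) * Z :=
      mul_le_mul_of_nonneg_right harith hZnonneg
    have h3 : (δ / T) * I ≤ (((n : ℝ) + 1) * δ) * Z := h1.trans h2
    have hTne : T ≠ 0 := hT.ne'
    have e1 : (T / δ) * ((δ / T) * I) = I := by
      field_simp
    have e2 : (T / δ) * ((((n : ℝ) + 1) * δ) * Z) = ((n : ℝ) + 1) * T * Z := by
      field_simp
    calc I = (T / δ) * ((δ / T) * I) := e1.symm
      _ ≤ (T / δ) * ((((n : ℝ) + 1) * δ) * Z) :=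
          mul_le_mul_of_nonneg_left h3 (by positivity)
      _ = ((n : ℝ) + 1) * T * Z := e2
  -- Step 4 : relate to the statement
  set c : ENNReal := ∫⁻ x in K, ENNReal.ofReal (Real.exp (-f x / T)) with hcdef
  set Zf : ℝ := ∫ x in K, Real.exp (-f x / T) with hZfdef
  set If : ℝ := ∫ x in K, Real.exp (-f x / T) * f x with hIfdef
  have hexp_split : ∀ x, Real.exp (-f x / T) = Real.exp (-m / T) * Real.exp (-g x / T) := by
    intro x
    rw [← Real.exp_add]
    congr 1
    rw [hgdef]
    field_simp
    ring
  have hZf_eq : Zf = Real.exp (-m / T) * Z := by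
    rw [hZfdef, hZdef, ← integral_const_mul]
    exact setIntegral_congr_fun hKmeas fun x _ => hexp_split x
  have hZfpos : 0 < Zf := by
    rw [hZf_eq]; positivity
  have hc_eq : c = ENNReal.ofReal Zf := by
    rw [hcdef, hZfdef,
      ofReal_integral_eq_lintegral_ofReal hint4
        (Filter.Eventually.of_forall fun x => (Real.exp_pos _).le)]
  have hcToReal : c⁻¹.toReal = Zf⁻¹ := by
    rw [ENNReal.toReal_inv, hc_eq, ENNReal.toReal_ofReal hZfpos.le]
  -- compute the integral with respect to the normalized measure
  have hdens : AEMeasurable (fun x => Real.toNNReal (Real.exp (-f x / T)))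
      (volume.restrict K) :=
    (continuous_real_toNNReal.comp_continuousOn
      (Real.continuous_exp.comp_continuousOn (hfcont.neg.div_const T))).aemeasurable hKmeas
  have hEint : (∫ x, f x ∂((volume.restrict K).withDensity
      fun x => ENNReal.ofReal (Real.exp (-f x / T)))) = If := by
    have : (fun x => ENNReal.ofReal (Real.exp (-f x / T)))
        = fun x => ((Real.toNNReal (Real.exp (-f x / T)) : NNReal) : ENNReal) := rfl
    rw [this, integral_withDensity_eq_integral_smul₀ hdens f, hIfdef]
    refine setIntegral_congr_fun hKmeas fun x _ => ?_
    simp [NNReal.smul_def, Real.coe_toNNReal _ (Real.exp_pos _).le]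
  have hmain : (∫ x, f x ∂(c⁻¹ • ((volume.restrict K).withDensity
      fun x => ENNReal.ofReal (Real.exp (-f x / T))))) = Zf⁻¹ * If := by
    rw [integral_smul_measure, hEint, hcToReal, smul_eq_mul]
  rw [hsInf]
  rw [show (∫ x, f x ∂((∫⁻ x in K, ENNReal.ofReal (Real.exp (-f x / T)))⁻¹ •
          ((volume.restrict K).withDensity fun x => ENNReal.ofReal (Real.exp (-f x / T)))))
      = Zf⁻¹ * If from hmain]
  -- If − m Zf = e^{−m/T} I
  have hIf_eq : If - m * Zf = Real.exp (-m / T) * I := by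
    have e1 : If - m * Zf = ∫ x in K, (Real.exp (-f x / T) * f x - m * Real.exp (-f x / T)) := by
      rw [hIfdef, hZfdef, integral_sub hint5 (hint4.const_mul m), integral_const_mul]
    rw [e1, hIdef, ← integral_const_mul]
    refine setIntegral_congr_fun hKmeas fun x _ => ?_
    rw [hexp_split x]
    simp only [hgdef]
    ring
  have hfinal : If - m * Zf ≤ ((n : ℝ) + 1) * T * Zf := by
    rw [hIf_eq, hZf_eq]
    calc Real.exp (-m / T) * I ≤ Real.exp (-m / T) * (((n : ℝ) + 1) * T * Z) :=
          mul_le_mul_of_nonneg_left step3 (Real.exp_pos _).le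
      _ = ((n : ℝ) + 1) * T * (Real.exp (-m / T) * Z) := by ring
  have hZfne : Zf ≠ 0 := hZfpos.ne'
  rw [sub_le_iff_le_add, inv_mul_le_iff₀ hZfpos]
  nlinarith
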